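/- If Γ is a connected strongly admissible graph and π is a strong congruence of Γ such that χ(Γ/π) = 1, then all blocks of π are singletons. -/

import Mathlib

noncomputable section

open Filter Topology

/-- A finite, directed, edge-colored graph with colors in `Fin s`,
with vertices living in an ambient type `V`. -/
structure CGraph (V : Type) (s : ℕ) where
  verts : Set V
  finite : verts.Finite
  nonem : verts.Nonempty
  E : Fin s → V → V → Prop
  memL : ∀ r a b, E r a b → a ∈ verts
  memR : ∀ r a b, E r a b → b ∈ verts

namespace CGraph

variable {V W : Type} {s : ℕ}

/-- A graph is trivial iff it has no edges (of any color). -/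
def Trivial (Γ : CGraph V s) : Prop := ∀ r a b, ¬ Γ.E r a b

/-- Two vertices are adjacent iff there is an edge (of any color, either direction)
between them. -/
def Adj (Γ : CGraph V s) (a b : V) : Prop := ∃ r, Γ.E r a b ∨ Γ.E r b a

/-- A graph is connected iff any two of its vertices are joined by a finite chain of
edges (of any colors and either direction). -/
def Connected (Γ : CGraph V s) : Prop :=
  ∀ a ∈ Γ.verts, ∀ b ∈ Γ.verts, Relation.ReflTransGen Γ.Adj a b

/-- `Γ'` is a subgraph of `Γ`. -/
def Subgraph (Γ' Γ : CGraph V s) : Prop :=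
  Γ'.verts ⊆ Γ.verts ∧ ∀ r a b, Γ'.E r a b → Γ.E r a b

/-- `C` is a connected component of `Γ`: a maximal connected subgraph. -/
def IsComponent (C Γ : CGraph V s) : Prop :=
  C.Subgraph Γ ∧ C.Connected ∧
    ∀ C' : CGraph V s, C'.Subgraph Γ → C'.Connected → C.Subgraph C' → C'.Subgraph C

/-- A graph is admissible iff no two distinct edges of the same color begin at the
same vertex or end at the same vertex. -/
def Admissible (Γ : CGraph V s) : Prop :=
  (∀ r a b b', Γ.E r a b → Γ.E r a b' → b = b') ∧
    (∀ r a a' b, Γ.E r a b → Γ.E r a' b → a = a')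

/-- `Γ.mono r` is `Γ` with all edges not of color `r` removed. -/
def mono (Γ : CGraph V s) (r : Fin s) : CGraph V s where
  verts := Γ.verts
  finite := Γ.finite
  nonem := Γ.nonem
  E := fun r' a b => r' = r ∧ Γ.E r' a b
  memL := fun r' a b h => Γ.memL r' a b h.2
  memR := fun r' a b h => Γ.memR r' a b h.2

/-- An `r`-path of `Γ` is a non-trivial connected component of `Γ.mono r`. -/
def IsRPath (P Γ : CGraph V s) (r : Fin s) : Prop :=
  P.IsComponent (Γ.mono r) ∧ ¬ P.Trivial

/-- A path of `Γ` is an `r`-path for some color `r`. -/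
def IsPathOf (P Γ : CGraph V s) : Prop := ∃ r, P.IsRPath Γ r

/-- A path is closed (a closed circuit) iff every one of its vertices has an
outgoing edge. -/
def Closed (P : CGraph V s) : Prop := ∀ a ∈ P.verts, ∃ r b, P.E r a b

/-- A loop of `Γ` is a path of `Γ` which is a closed circuit. -/
def IsLoopOf (P Γ : CGraph V s) : Prop := P.IsPathOf Γ ∧ P.Closed

/-- A string of `Γ` is a path of `Γ` which is not a loop. -/
def IsStringOf (P Γ : CGraph V s) : Prop := P.IsPathOf Γ ∧ ¬ P.Closed

/-- The number of edges of `Γ` (counting colors). -/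
def edgeCount (Γ : CGraph V s) : ℕ :=
  Nat.card {p : Fin s × V × V // Γ.E p.1 p.2.1 p.2.2}

/-- The number of loops (of any color) of `Γ`. -/
def loopCount (Γ : CGraph V s) : ℕ :=
  Nat.card {P : CGraph V s // P.IsLoopOf Γ}

/-- The number of vertices of `Γ`. -/
def vertCount (Γ : CGraph V s) : ℕ := Nat.card Γ.verts

/-- The loop-characteristic `χ(Γ) = V(Γ) - E(Γ) + L(Γ)`. -/
def chi (Γ : CGraph V s) : ℤ :=
  (Γ.vertCount : ℤ) - (Γ.edgeCount : ℤ) + (Γ.loopCount : ℤ)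

/-- `Γ.erase P` is the graph obtained from `Γ` by removing all edges of `P`. -/
def erase (Γ P : CGraph V s) : CGraph V s where
  verts := Γ.verts
  finite := Γ.finite
  nonem := Γ.nonem
  E := fun r a b => Γ.E r a b ∧ ¬ P.E r a b
  memL := fun r a b h => Γ.memL r a b h.1
  memR := fun r a b h => Γ.memR r a b h.1

/-- A graph is strongly admissible (w.r.t. `d : Fin s → ℕ∞`) iff it is admissible,
every `r`-loop has length `d r`, and every `r`-string has length `< d r`. -/
def StronglyAdmissible (d : Fin s → ℕ∞) (Γ : CGraph V s) : Prop :=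
  Γ.Admissible ∧ ∀ r P, IsRPath P Γ r →
    (P.Closed → (P.edgeCount : ℕ∞) = d r) ∧ (¬ P.Closed → (P.edgeCount : ℕ∞) < d r)

/-- The quotient of `Γ` by a partition (setoid) `π` of the ambient vertex type. -/
def quot (Γ : CGraph V s) (π : Setoid V) : CGraph (Quotient π) s where
  verts := Quotient.mk π '' Γ.verts
  finite := Γ.finite.image _
  nonem := Γ.nonem.image _
  E := fun r A B => ∃ a b, Γ.E r a b ∧ Quotient.mk π a = A ∧ Quotient.mk π b = B
  memL := fun r A B h => by
    obtain ⟨a, b, he, ha, hb⟩ := h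
    exact ⟨a, Γ.memL r a b he, ha⟩
  memR := fun r A B h => by
    obtain ⟨a, b, he, ha, hb⟩ := h
    exact ⟨b, Γ.memR r a b he, hb⟩

/-- `π` is a congruence of `Γ`: for any two edges of the same color, the source
blocks agree iff the target blocks agree. -/
def IsCongruence (Γ : CGraph V s) (π : Setoid V) : Prop :=
  ∀ r a₁ b₁ a₂ b₂, Γ.E r a₁ b₁ → Γ.E r a₂ b₂ → (π.r a₁ a₂ ↔ π.r b₁ b₂)

/-- `π` is a strong congruence of `Γ`: a congruence whose quotient is strongly
admissible. -/
def IsStrongCongruence (d : Fin s → ℕ∞) (Γ : CGraph V s) (π : Setoid V) : Prop :=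
  Γ.IsCongruence π ∧ (Γ.quot π).StronglyAdmissible d

/-- Isomorphism of edge-colored graphs: a bijection between the vertex sets
preserving the `r`-edges in both directions, for every color `r`. -/
def Iso (Γ₁ : CGraph V s) (Γ₂ : CGraph W s) : Prop :=
  ∃ Φ : V → W, Set.BijOn Φ Γ₁.verts Γ₂.verts ∧
    ∀ r a b, a ∈ Γ₁.verts → b ∈ Γ₁.verts → (Γ₂.E r (Φ a) (Φ b) ↔ Γ₁.E r a b)

end CGraph

namespace CGraph

attribute [local instance] Classical.propDecidable

variable {V : Type} {s : ℕ}

/-- Edge triples of a graph. -/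
def Eset (G : CGraph V s) : Set (Fin s × V × V) := {p | G.E p.1 p.2.1 p.2.2}

/-- A triple `p` connects `x` and `y` (in either direction). -/
def connects (p : Fin s × V × V) (x y : V) : Prop :=
  (p.2.1 = x ∧ p.2.2 = y) ∨ (p.2.1 = y ∧ p.2.2 = x)

lemma connects_symm {p : Fin s × V × V} {x y : V} (h : connects p x y) : connects p y x := by
  rcases h with h | h
  · exact Or.inr h
  · exact Or.inl h

lemma ext' {G H : CGraph V s} (hv : G.verts = H.verts)
    (he : ∀ r a b, G.E r a b ↔ H.E r a b) : G = H := by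
  cases G with
  | mk v f n E l r =>
    cases H with
    | mk v' f' n' E' l' r' =>
      simp only [mk.injEq]
      constructor
      · exact hv
      · funext r a b
        exact propext (he r a b)

lemma Eset_finite (G : CGraph V s) : (Eset G).Finite := by
  have : Eset G ⊆ (Set.univ : Set (Fin s)) ×ˢ (G.verts ×ˢ G.verts) := by
    intro p hp
    exact ⟨trivial, G.memL _ _ _ hp, G.memR _ _ _ hp⟩
  exact Set.Finite.subset (Set.Finite.prod (Set.finite_univ) (G.finite.prod G.finite)) this

lemma adj_iff {G : CGraph V s} {a b : V} :
    G.Adj a b ↔ ∃ p ∈ Eset G, connects p a b := by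
  constructor
  · rintro ⟨r, h | h⟩
    · exact ⟨(r, a, b), h, Or.inl ⟨rfl, rfl⟩⟩
    · exact ⟨(r, b, a), h, Or.inr ⟨rfl, rfl⟩⟩
  · rintro ⟨⟨r, u, v⟩, hp, huv | huv⟩
    · obtain ⟨h1, h2⟩ := huv; subst h1; subst h2; exact ⟨r, Or.inl hp⟩
    · obtain ⟨h1, h2⟩ := huv; subst h1; subst h2; exact ⟨r, Or.inr hp⟩

lemma adj_symm {G : CGraph V s} {a b : V} (h : G.Adj a b) : G.Adj b a := by
  rcases h with ⟨r, h | h⟩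
  · exact ⟨r, Or.inr h⟩
  · exact ⟨r, Or.inl h⟩

lemma adj_mem_left {G : CGraph V s} {a b : V} (h : G.Adj a b) : a ∈ G.verts := by
  rcases h with ⟨r, h | h⟩
  · exact G.memL _ _ _ h
  · exact G.memR _ _ _ h

lemma adj_mem_right {G : CGraph V s} {a b : V} (h : G.Adj a b) : b ∈ G.verts :=
  adj_mem_left (adj_symm h)

lemma rtg_symm {α : Type*} {r : α → α → Prop} (hsym : ∀ x y, r x y → r y x)
    {a b : α} (h : Relation.ReflTransGen r a b) : Relation.ReflTransGen r b a := by
  induction h with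
  | refl => exact .refl
  | tail _ hstep ih => exact Relation.ReflTransGen.trans (.single (hsym _ _ hstep)) ih

lemma rtg_lift_rtg {α : Type*} {r q : α → α → Prop}
    (h : ∀ x y, r x y → Relation.ReflTransGen q x y) {a b : α}
    (hab : Relation.ReflTransGen r a b) : Relation.ReflTransGen q a b := by
  induction hab with
  | refl => exact .refl
  | tail _ hstep ih => exact ih.trans (h _ _ hstep)

/-- Delete a set of edge triples from a graph. -/
def del (G : CGraph V s) (X : Set (Fin s × V × V)) : CGraph V s where
  verts := G.verts
  finite := G.finite
  nonem := G.nonem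
  E := fun r a b => G.E r a b ∧ (r, a, b) ∉ X
  memL := fun r a b h => G.memL r a b h.1
  memR := fun r a b h => G.memR r a b h.1

lemma Eset_del (G : CGraph V s) (X : Set (Fin s × V × V)) :
    Eset (G.del X) = Eset G \ X := by
  ext ⟨r, a, b⟩; rfl

lemma del_subgraph (G : CGraph V s) (X : Set (Fin s × V × V)) : (G.del X).Subgraph G :=
  ⟨le_refl _, fun _ _ _ h => h.1⟩

end CGraph
namespace CGraph

attribute [local instance] Classical.propDecidable

variable {V : Type} {s : ℕ}

lemma edgeCount_eq_ncard (G : CGraph V s) : G.edgeCount = (Eset G).ncard := by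
  rw [edgeCount, ← Nat.card_coe_set_eq]
  rfl

lemma vertCount_eq_ncard (G : CGraph V s) : G.vertCount = G.verts.ncard := by
  rw [vertCount, ← Nat.card_coe_set_eq]

/-- Turn reachability into a walk function. -/
lemma rtg_to_walk {G : CGraph V s} {a b : V} (h : Relation.ReflTransGen G.Adj a b) :
    ∃ n, ∃ w : ℕ → V, w 0 = a ∧ w n = b ∧ ∀ i < n, G.Adj (w i) (w (i + 1)) := by
  induction h with
  | refl => exact ⟨0, fun _ => a, rfl, rfl, by omega⟩
  | @tail c b _ hstep ih =>
    obtain ⟨n, w, h0, hn, hw⟩ := ih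
    refine ⟨n + 1, fun i => if i ≤ n then w i else b, by simp [h0], by simp, ?_⟩
    intro i hi
    rcases Nat.lt_or_ge i n with h | h
    · simpa [Nat.le_of_lt h, Nat.succ_le_of_lt h] using hw i h
    · have : i = n := by omega
      subst this
      simpa [hn] using hstep

lemma walk_to_rtg {G : CGraph V s} {n : ℕ} {w : ℕ → V}
    (hw : ∀ i < n, G.Adj (w i) (w (i + 1))) :
    Relation.ReflTransGen G.Adj (w 0) (w n) := by
  induction n with
  | zero => exact .refl
  | succ m ih =>
    exact Relation.ReflTransGen.tail (ih (fun i hi => hw i (by omega))) (hw m (by omega))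

/-- Tree bound: a connected graph has at least `V - 1` edges. -/
lemma vertCount_le_edgeCount_add_one (G : CGraph V s) (hconn : G.Connected) :
    G.vertCount ≤ G.edgeCount + 1 := by
  classical
  obtain ⟨v0, hv0⟩ := G.nonem
  set P : V → ℕ → Prop := fun x n =>
    ∃ w : ℕ → V, w 0 = v0 ∧ w n = x ∧ ∀ i < n, G.Adj (w i) (w (i + 1)) with hP
  have hex : ∀ x ∈ G.verts, ∃ n, P x n := by
    intro x hx
    obtain ⟨n, w, h0, hn, hw⟩ := rtg_to_walk (hconn v0 hv0 x hx)
    exact ⟨n, w, h0, hn, hw⟩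
  set dist : V → ℕ := fun x => if h : ∃ n, P x n then Nat.find h else 0 with hdist
  -- every non-basepoint vertex has an incident edge whose other endpoint is closer
  have key : ∀ x ∈ G.verts \ {v0}, ∃ p ∈ Eset G, ∃ y, connects p x y ∧ dist y < dist x := by
    rintro x ⟨hx, hxv0⟩
    have h := hex x hx
    have hfind : P x (Nat.find h) := Nat.find_spec h
    obtain ⟨w, h0, hn, hw⟩ := hfind
    have hdx : dist x = Nat.find h := by simp [hdist, h]
    have hpos : 0 < Nat.find h := by
      rcases Nat.eq_zero_or_pos (Nat.find h) with hp | hp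
      · exfalso; apply hxv0; rw [Set.mem_singleton_iff, ← h0, ← hn, hp]
      · exact hp
    set m := Nat.find h with hm
    have hadj : G.Adj (w (m - 1)) (w m) := by
      have := hw (m - 1) (by omega)
      have : m - 1 + 1 = m := by omega
      simpa [this] using hw (m - 1) (by omega)
    set y := w (m - 1) with hy
    have hydist : dist y < dist x := by
      have hPy : P y (m - 1) := ⟨w, h0, rfl, fun i hi => hw i (by omega)⟩
      have hyex : ∃ n, P y n := ⟨m - 1, hPy⟩
      have : dist y ≤ m - 1 := by
        rw [hdist]; simp only [hyex, dif_pos]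
        exact Nat.find_le hPy
      omega
    obtain ⟨p, hp, hcon⟩ := adj_iff.mp (adj_symm (hn ▸ hadj))
    exact ⟨p, hp, y, hcon, hydist⟩
  by_cases hE : (Eset G).Nonempty
  swap
  · -- no edges: the graph is a single vertex
    have hsub : G.verts ⊆ {v0} := by
      intro x hx
      by_contra hxv
      obtain ⟨p, hp, -⟩ := key x ⟨hx, hxv⟩
      exact hE ⟨p, hp⟩
    have : G.verts.ncard ≤ 1 := by
      calc G.verts.ncard ≤ ({v0} : Set V).ncard :=
            Set.ncard_le_ncard hsub (Set.finite_singleton v0)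
        _ = 1 := Set.ncard_singleton v0
    rw [vertCount_eq_ncard]
    omega
  haveI : Nonempty (Fin s × V × V) := ⟨hE.choose⟩
  choose! f hf1 hf2 using key
  have hinj : Set.InjOn f (G.verts \ {v0}) := by
    intro x hx x' hx' heq
    by_contra hne
    obtain ⟨y, hcy, hdy⟩ := hf2 x hx
    obtain ⟨y', hcy', hdy'⟩ := hf2 x' hx'
    rw [heq] at hcy
    -- p connects x,y and x',y' with x ≠ x' : forces y = x', y' = x
    have hyx' : y = x' ∧ y' = x := by
      rcases hcy with ⟨e1, e2⟩ | ⟨e1, e2⟩ <;> rcases hcy' with ⟨e3, e4⟩ | ⟨e3, e4⟩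
      · exact absurd (e1.symm.trans e3) hne
      · constructor
        · rw [← e2, e4]
        · rw [← e3, e1]
      · constructor
        · rw [← e1, e3]
        · rw [← e4, e2]
      · exact absurd (e2.symm.trans e4) hne
    rw [hyx'.1] at hdy
    rw [hyx'.2] at hdy'
    omega
  have hmaps : ∀ x ∈ G.verts \ {v0}, f x ∈ Eset G := fun x hx => hf1 x hx
  have hcard : (G.verts \ {v0}).ncard ≤ (Eset G).ncard :=
    Set.ncard_le_ncard_of_injOn f hmaps hinj (Eset_finite G)
  have hdiff : (G.verts \ {v0}).ncard = G.verts.ncard - 1 :=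
    Set.ncard_diff_singleton_of_mem hv0
  have hpos : 0 < G.verts.ncard := (Set.ncard_pos G.finite).mpr G.nonem

  rw [vertCount_eq_ncard, edgeCount_eq_ncard]
  omega

end CGraph
namespace CGraph

variable {V : Type} {s : ℕ}

lemma Subgraph.trans {G1 G2 G3 : CGraph V s} (h12 : G1.Subgraph G2) (h23 : G2.Subgraph G3) :
    G1.Subgraph G3 :=
  ⟨h12.1.trans h23.1, fun r a b h => h23.2 r a b (h12.2 r a b h)⟩

lemma subgraph_antisymm {G H : CGraph V s} (h1 : G.Subgraph H) (h2 : H.Subgraph G) : G = H :=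
  ext' (Set.Subset.antisymm h1.1 h2.1) (fun r a b => ⟨h1.2 r a b, h2.2 r a b⟩)

lemma adj_of_subgraph {G H : CGraph V s} (h : G.Subgraph H) {a b : V} (hab : G.Adj a b) :
    H.Adj a b := by
  rcases hab with ⟨r, hr | hr⟩
  · exact ⟨r, Or.inl (h.2 _ _ _ hr)⟩
  · exact ⟨r, Or.inr (h.2 _ _ _ hr)⟩

lemma rtg_adj_of_subgraph {G H : CGraph V s} (h : G.Subgraph H) {a b : V}
    (hab : Relation.ReflTransGen G.Adj a b) : Relation.ReflTransGen H.Adj a b :=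
  rtg_lift_rtg (fun _ _ hxy => Relation.ReflTransGen.single (adj_of_subgraph h hxy)) hab

/-- The connected component of `G` containing `v`. -/
def compOf (G : CGraph V s) (v : V) (hv : v ∈ G.verts) : CGraph V s where
  verts := {x ∈ G.verts | Relation.ReflTransGen G.Adj v x}
  finite := G.finite.subset (fun _ hx => hx.1)
  nonem := ⟨v, hv, Relation.ReflTransGen.refl⟩
  E := fun r a b => G.E r a b ∧ Relation.ReflTransGen G.Adj v a
  memL := fun r a b h => ⟨G.memL r a b h.1, h.2⟩
  memR := fun r a b h => ⟨G.memR r a b h.1, h.2.tail ⟨r, Or.inl h.1⟩⟩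

lemma compOf_subgraph (G : CGraph V s) (v : V) (hv : v ∈ G.verts) :
    (compOf G v hv).Subgraph G :=
  ⟨fun _ hx => hx.1, fun _ _ _ h => h.1⟩

lemma mem_compOf_verts {G : CGraph V s} {v : V} {hv : v ∈ G.verts} {x : V} :
    x ∈ (compOf G v hv).verts ↔ x ∈ G.verts ∧ Relation.ReflTransGen G.Adj v x :=
  Iff.rfl

lemma compOf_rtg {G : CGraph V s} {v : V} (hv : v ∈ G.verts) {x : V}
    (h : Relation.ReflTransGen G.Adj v x) :
    Relation.ReflTransGen (compOf G v hv).Adj v x := by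
  induction h with
  | refl => exact .refl
  | @tail a b h1 hstep ih =>
    refine ih.tail ?_
    rcases hstep with ⟨r, hr | hr⟩
    · exact ⟨r, Or.inl ⟨hr, h1⟩⟩
    · exact ⟨r, Or.inr ⟨hr, h1.tail ⟨r, Or.inr hr⟩⟩⟩

lemma compOf_connected (G : CGraph V s) (v : V) (hv : v ∈ G.verts) :
    (compOf G v hv).Connected := by
  intro a ha b hb
  have h1 := compOf_rtg hv ha.2
  have h2 := compOf_rtg hv hb.2
  exact Relation.ReflTransGen.trans (rtg_symm (fun _ _ h => adj_symm h) h1) h2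

lemma isComponent_compOf (G : CGraph V s) (v : V) (hv : v ∈ G.verts) :
    (compOf G v hv).IsComponent G := by
  refine ⟨compOf_subgraph G v hv, compOf_connected G v hv, ?_⟩
  intro C' hC'sub hC'conn hsub
  constructor
  · intro x hx
    have hvC : v ∈ C'.verts := hsub.1 ⟨hv, Relation.ReflTransGen.refl⟩
    have : Relation.ReflTransGen C'.Adj v x := hC'conn v hvC x hx
    exact ⟨hC'sub.1 hx, rtg_adj_of_subgraph hC'sub this⟩
  · intro r a b h
    have ha : a ∈ C'.verts := C'.memL r a b h
    have hvC : v ∈ C'.verts := hsub.1 ⟨hv, Relation.ReflTransGen.refl⟩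
    exact ⟨hC'sub.2 r a b h, rtg_adj_of_subgraph hC'sub (hC'conn v hvC a ha)⟩

lemma component_eq_compOf {G P : CGraph V s} (hP : P.IsComponent G) {v : V}
    (hv : v ∈ P.verts) : P = compOf G v (hP.1.1 hv) := by
  have hvG : v ∈ G.verts := hP.1.1 hv
  have hPsub : P.Subgraph (compOf G v hvG) := by
    constructor
    · intro x hx
      exact ⟨hP.1.1 hx, rtg_adj_of_subgraph hP.1 (hP.2.1 v hv x hx)⟩
    · intro r a b h
      have ha : a ∈ P.verts := P.memL r a b h
      exact ⟨hP.1.2 r a b h, rtg_adj_of_subgraph hP.1 (hP.2.1 v hv a ha)⟩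
  have := hP.2.2 (compOf G v hvG) (compOf_subgraph G v hvG) (compOf_connected G v hvG) hPsub
  exact subgraph_antisymm hPsub this

lemma components_eq_of_mem {G P Q : CGraph V s} (hP : P.IsComponent G) (hQ : Q.IsComponent G)
    {v : V} (hvP : v ∈ P.verts) (hvQ : v ∈ Q.verts) : P = Q := by
  rw [component_eq_compOf hP hvP, component_eq_compOf hQ hvQ]

end CGraph
namespace CGraph

attribute [local instance] Classical.propDecidable

variable {V : Type} {s : ℕ}

lemma mono_subgraph (G : CGraph V s) (r : Fin s) : (G.mono r).Subgraph G :=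
  ⟨le_refl _, fun _ _ _ h => h.2⟩

lemma color_of_mono {G : CGraph V s} {r : Fin s} {P : CGraph V s}
    (hsub : P.Subgraph (G.mono r)) {r' : Fin s} {a b : V} (h : P.E r' a b) :
    r' = r ∧ G.E r' a b := by
  have := hsub.2 r' a b h
  exact ⟨this.1, this.2⟩

/-- The successor function of a graph: pick the (unique) out-neighbour. -/
def nxt (P : CGraph V s) : V → V := fun a =>
  if h : ∃ q : Fin s × V, P.E q.1 a q.2 then (Classical.choose h).2 else a

section ClosedPath

variable {G P : CGraph V s} {r : Fin s}
  (hadm : G.Admissible) (hsub : P.Subgraph (G.mono r)) (hcl : P.Closed)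

include hsub hcl in
lemma nxt_spec {a : V} (ha : a ∈ P.verts) : P.E r a (P.nxt a) := by
  obtain ⟨r', b, hb⟩ := hcl a ha
  have hex : ∃ q : Fin s × V, P.E q.1 a q.2 := ⟨(r', b), hb⟩
  have hspec := Classical.choose_spec hex
  have hc := (color_of_mono hsub hspec).1
  rw [nxt, dif_pos hex]
  rw [← hc]
  exact hspec

include hadm hsub hcl in
lemma nxt_eq {r' : Fin s} {a b : V} (h : P.E r' a b) : P.nxt a = b := by
  have ha : a ∈ P.verts := P.memL _ _ _ h
  obtain ⟨hc, hG⟩ := color_of_mono hsub h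
  subst hc
  have h2 := nxt_spec hsub hcl ha
  have hG2 := (color_of_mono hsub h2).2
  exact hadm.1 _ _ _ _ hG2 hG

include hsub hcl in
lemma nxt_mem {a : V} (ha : a ∈ P.verts) : P.nxt a ∈ P.verts :=
  P.memR _ _ _ (nxt_spec hsub hcl ha)

include hadm hsub hcl in
lemma nxt_inj {a b : V} (ha : a ∈ P.verts) (hb : b ∈ P.verts)
    (h : P.nxt a = P.nxt b) : a = b := by
  have h1 := (color_of_mono hsub (nxt_spec hsub hcl ha)).2
  have h2 := (color_of_mono hsub (nxt_spec hsub hcl hb)).2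
  rw [h] at h1
  exact hadm.2 _ _ _ _ h1 h2

include hsub hcl in
lemma nxt_iter_mem {a : V} (ha : a ∈ P.verts) (k : ℕ) : P.nxt^[k] a ∈ P.verts := by
  induction k with
  | zero => exact ha
  | succ n ih =>
    rw [Function.iterate_succ_apply']
    exact nxt_mem hsub hcl ih

include hadm hsub hcl in
lemma nxt_iter_cancel {a : V} (ha : a ∈ P.verts) {i k : ℕ}
    (h : P.nxt^[i] a = P.nxt^[i + k] a) : a = P.nxt^[k] a := by
  induction i with
  | zero => simpa using h
  | succ n ih =>
    apply ih
    have e1 : P.nxt^[n + 1] a = P.nxt (P.nxt^[n] a) := Function.iterate_succ_apply' _ _ _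
    have e2 : P.nxt^[n + 1 + k] a = P.nxt (P.nxt^[n + k] a) := by
      rw [show n + 1 + k = (n + k) + 1 by omega]
      exact Function.iterate_succ_apply' _ _ _
    rw [e1, e2] at h
    exact nxt_inj hadm hsub hcl (nxt_iter_mem hsub hcl ha n) (nxt_iter_mem hsub hcl ha (n + k)) h

include hadm hsub hcl in
lemma nxt_periodic {a : V} (ha : a ∈ P.verts) : ∃ m, 0 < m ∧ P.nxt^[m] a = a := by
  haveI : Finite ↥P.verts := P.finite.to_subtype
  have : ¬ Function.Injective (fun k : ℕ => (⟨P.nxt^[k] a, nxt_iter_mem hsub hcl ha k⟩ : ↥P.verts)) :=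
    fun hinj => (Finite.of_injective _ hinj).false
  rw [Function.not_injective_iff] at this
  obtain ⟨i, j, hij, hne⟩ := this
  have hval : P.nxt^[i] a = P.nxt^[j] a := congrArg Subtype.val hij
  rcases Nat.lt_or_ge i j with h | h
  · refine ⟨j - i, by omega, ?_⟩
    exact (nxt_iter_cancel hadm hsub hcl ha (k := j - i)
      (by rw [show i + (j - i) = j by omega]; exact hval)).symm
  · have hj : j < i := by omega
    refine ⟨i - j, by omega, ?_⟩
    exact (nxt_iter_cancel hadm hsub hcl ha (k := i - j)
      (by rw [show j + (i - j) = i by omega]; exact hval.symm)).symm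

include hadm hsub hcl in
lemma closed_in_edge {b : V} (hb : b ∈ P.verts) : ∃ a ∈ P.verts, P.E r a b := by
  obtain ⟨m, hm, hper⟩ := nxt_periodic hadm hsub hcl hb
  refine ⟨P.nxt^[m - 1] b, nxt_iter_mem hsub hcl hb _, ?_⟩
  have := nxt_spec hsub hcl (nxt_iter_mem hsub hcl hb (m - 1))
  have he : P.nxt (P.nxt^[m - 1] b) = b := by
    have h1 : P.nxt^[m - 1 + 1] b = P.nxt (P.nxt^[m - 1] b) :=
      Function.iterate_succ_apply' _ _ _
    rw [← h1, show m - 1 + 1 = m by omega]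
    exact hper
  rwa [he] at this

include hadm hsub hcl in
/-- Removing one edge of a closed path, its endpoints remain connected
(walk around the rest of the cycle). -/
lemma closed_arc {u v : V} (huv : P.E r u v) :
    Relation.ReflTransGen
      (fun x y => ∃ p ∈ Eset P, p ≠ (r, u, v) ∧ connects p x y) v u := by
  have hu : u ∈ P.verts := P.memL _ _ _ huv
  have hv : v ∈ P.verts := P.memR _ _ _ huv
  have hfu : P.nxt u = v := nxt_eq hadm hsub hcl huv
  have hper : ∃ m, 0 < m ∧ P.nxt^[m] v = v := nxt_periodic hadm hsub hcl hv
  set m := Nat.find hper with hm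
  obtain ⟨hmpos, hmper⟩ : 0 < m ∧ P.nxt^[m] v = v := Nat.find_spec hper
  -- distinct iterates below the minimal period
  have hdist : ∀ i j, i < j → j < m → P.nxt^[i] v ≠ P.nxt^[j] v := by
    intro i j hij hjm heq
    have := nxt_iter_cancel hadm hsub hcl hv (i := i) (k := j - i)
      (by rw [show i + (j - i) = j by omega]; exact heq)
    exact Nat.find_min hper (m := j - i) (by omega) ⟨by omega, this.symm⟩
  -- u is the last iterate
  have hu_eq : u = P.nxt^[m - 1] v := by
    apply nxt_inj hadm hsub hcl hu (nxt_iter_mem hsub hcl hv _)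
    have h1 : P.nxt^[m - 1 + 1] v = P.nxt (P.nxt^[m - 1] v) :=
      Function.iterate_succ_apply' _ _ _
    rw [hfu, ← h1, show m - 1 + 1 = m by omega]
    exact hmper.symm
  -- walk from v to each iterate
  have hwalk : ∀ k, k ≤ m - 1 → Relation.ReflTransGen
      (fun x y => ∃ p ∈ Eset P, p ≠ (r, u, v) ∧ connects p x y) v (P.nxt^[k] v) := by
    intro k
    induction k with
    | zero => intro _; exact .refl
    | succ n ih =>
      intro hn
      refine (ih (by omega)).tail ?_
      refine ⟨(r, P.nxt^[n] v, P.nxt^[n + 1] v), ?_, ?_, ?_⟩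
      · have h2 := nxt_spec hsub hcl (nxt_iter_mem hsub hcl hv n)
        have h1 : P.nxt^[n + 1] v = P.nxt (P.nxt^[n] v) :=
          Function.iterate_succ_apply' _ _ _
        show P.E r (P.nxt^[n] v) (P.nxt^[n + 1] v)
        rw [h1]
        exact h2
      · intro hcontra
        have : P.nxt^[n] v = u := congrArg (fun p : Fin s × V × V => p.2.1) hcontra
        rw [hu_eq] at this
        exact hdist n (m - 1) (by omega) (by omega) this
      · exact Or.inl ⟨rfl, rfl⟩
  have := hwalk (m - 1) (le_refl _)
  rwa [← hu_eq] at this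

end ClosedPath

end CGraph
namespace CGraph

attribute [local instance] Classical.propDecidable

variable {V : Type} {s : ℕ}

lemma loop_spec {G P : CGraph V s} (h : P.IsLoopOf G) :
    ∃ r, P.IsComponent (G.mono r) ∧ ¬ P.Trivial ∧ P.Closed := by
  obtain ⟨⟨r, hcomp, hnt⟩, hcl⟩ := h
  exact ⟨r, hcomp, hnt, hcl⟩

lemma loops_edge_disjoint {G P Q : CGraph V s} (hP : P.IsLoopOf G) (hQ : Q.IsLoopOf G)
    {p : Fin s × V × V} (hpP : p ∈ Eset P) (hpQ : p ∈ Eset Q) : P = Q := by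
  obtain ⟨r, hPc, -, -⟩ := loop_spec hP
  obtain ⟨r', hQc, -, -⟩ := loop_spec hQ
  have hr : p.1 = r := (color_of_mono hPc.1 hpP).1
  have hr' : p.1 = r' := (color_of_mono hQc.1 hpQ).1
  subst hr
  rw [← hr'] at hQc
  exact components_eq_of_mem hPc hQc (P.memL _ _ _ hpP) (Q.memL _ _ _ hpQ)

lemma loop_subgraph {G P : CGraph V s} (h : P.IsLoopOf G) : P.Subgraph G := by
  obtain ⟨r, hcomp, -, -⟩ := loop_spec h
  exact Subgraph.trans hcomp.1 (mono_subgraph G r)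

lemma Eset_subset_of_subgraph {G P : CGraph V s} (h : P.Subgraph G) : Eset P ⊆ Eset G :=
  fun p hp => h.2 p.1 p.2.1 p.2.2 hp

lemma loops_finite (G : CGraph V s) : Finite {P : CGraph V s // P.IsLoopOf G} := by
  have hsubV : ({t : Set V | t ⊆ G.verts}).Finite := G.finite.finite_subsets
  have hsubE : ({X : Set (Fin s × V × V) | X ⊆ Eset G}).Finite :=
    (Eset_finite G).finite_subsets
  haveI := hsubV.to_subtype
  haveI := hsubE.to_subtype
  refine Finite.of_injective (β := {t : Set V | t ⊆ G.verts} × {X | X ⊆ Eset G})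
    (fun P => (⟨P.1.verts, (loop_subgraph P.2).1⟩,
      ⟨Eset P.1, Eset_subset_of_subgraph (loop_subgraph P.2)⟩)) ?_
  intro P Q h
  have h1 : P.1.verts = Q.1.verts := congrArg (fun z => z.1.1) h
  have h2 : Eset P.1 = Eset Q.1 := congrArg (fun z => z.2.1) h
  apply Subtype.ext
  apply ext' h1
  intro r a b
  constructor
  · intro hE
    exact (h2 ▸ (hE : (r, a, b) ∈ Eset P.1) : (r, a, b) ∈ Eset Q.1)
  · intro hE
    exact (h2.symm ▸ (hE : (r, a, b) ∈ Eset Q.1) : (r, a, b) ∈ Eset P.1)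

/-- The key Γ-side lemma: a directed `r`-chain of length `d r` with distinct
vertices closes up. -/
lemma chain_closes {G : CGraph V s} {d : Fin s → ℕ∞} (hsa : G.StronglyAdmissible d)
    {r : Fin s} {n : ℕ} (hn : 0 < n) (hdr : (n : ℕ∞) = d r) {y : ℕ → V}
    (hy : ∀ i < n, G.E r (y i) (y (i + 1)))
    (hinj : ∀ i < n, ∀ j < n, y i = y j → i = j) :
    y n = y 0 := by
  have hv0 : y 0 ∈ (G.mono r).verts := G.memL _ _ _ (hy 0 hn)
  set P := compOf (G.mono r) (y 0) hv0 with hP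
  -- reachability of all chain vertices
  have hreach : ∀ i ≤ n, Relation.ReflTransGen (G.mono r).Adj (y 0) (y i) := by
    intro i hi
    induction i with
    | zero => exact .refl
    | succ k ih =>
      exact (ih (by omega)).tail ⟨r, Or.inl ⟨rfl, hy k (by omega)⟩⟩
  have hEdges : ∀ i < n, (r, y i, y (i + 1)) ∈ Eset P := by
    intro i hi
    exact ⟨⟨rfl, hy i hi⟩, hreach i (by omega)⟩
  have hpath : P.IsRPath G r := by
    refine ⟨isComponent_compOf _ _ _, ?_⟩
    intro htriv
    exact htriv r (y 0) (y 1) (hEdges 0 hn)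
  have hPsubG : P.Subgraph G := Subgraph.trans (compOf_subgraph _ _ _) (mono_subgraph G r)
  have hfinP : (Eset P).Finite := (Eset_finite G).subset (Eset_subset_of_subgraph hPsubG)
  -- the chain gives n distinct edges of P
  set Schain : Set (Fin s × V × V) :=
    (fun i => (r, y i, y (i + 1))) '' ↑(Finset.range n) with hSchain
  have hSsub : Schain ⊆ Eset P := by
    rintro p ⟨i, hi, rfl⟩
    exact hEdges i (Finset.mem_range.mp hi)
  have hScard : Schain.ncard = n := by
    rw [hSchain, Set.ncard_image_of_injOn, Set.ncard_coe_finset, Finset.card_range]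
    intro i hi j hj hij
    have hyij : y i = y j := congrArg (fun p : Fin s × V × V => p.2.1) hij
    exact hinj i (Finset.mem_range.mp hi) j (Finset.mem_range.mp hj) hyij
  have hEcard : n ≤ (Eset P).ncard := by
    rw [← hScard]
    exact Set.ncard_le_ncard hSsub hfinP
  have hclosed : P.Closed := by
    by_contra hnc
    have := ((hsa.2 r P hpath).2 hnc)
    rw [← hdr] at this
    have h2 : P.edgeCount < n := by exact_mod_cast this
    rw [edgeCount_eq_ncard] at h2
    omega
  have hcount : P.edgeCount = n := by
    have := (hsa.2 r P hpath).1 hclosed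
    rw [← hdr] at this
    exact_mod_cast this
  have hle : (Eset P).ncard ≤ Schain.ncard := by
    rw [hScard, ← edgeCount_eq_ncard, hcount]
  have hEq : Schain = Eset P := Set.eq_of_subset_of_ncard_le hSsub hle hfinP
  -- now use closedness at y n
  have hyn : y n ∈ P.verts := P.memR _ _ _ (by
    have := hEdges (n - 1) (by omega)
    have heq : n - 1 + 1 = n := by omega
    rw [heq] at this
    exact this)
  obtain ⟨r', b, hb⟩ := hclosed (y n) hyn
  have hbS : (r', y n, b) ∈ Schain := hEq ▸ (hb : (r', y n, b) ∈ Eset P)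
  obtain ⟨i, him, heq⟩ := hbS
  have hi : i < n := Finset.mem_range.mp him
  have hyi : y i = y n := congrArg (fun p : Fin s × V × V => p.2.1) heq
  rcases Nat.eq_zero_or_pos i with h0 | hpos
  · rw [← hyi, h0]
  · exfalso
    have e1 : G.E r (y (i - 1)) (y i) := by
      have := hy (i - 1) (by omega)
      have heq2 : i - 1 + 1 = i := by omega
      rwa [heq2] at this
    have e2 : G.E r (y (n - 1)) (y n) := by
      have := hy (n - 1) (by omega)
      have heq2 : n - 1 + 1 = n := by omega
      rwa [heq2] at this
    rw [← hyi] at e2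
    have := hsa.1.2 _ _ _ _ e2 e1
    have := hinj (n - 1) (by omega) (i - 1) (by omega) this
    omega

end CGraph
namespace CGraph

attribute [local instance] Classical.propDecidable

variable {W : Type} {s : ℕ}

/-- The key Δ-side lemma: in a connected admissible graph with `χ = 1`, every
simple closed walk consists exactly of the edges of a loop. -/
lemma closed_walk_is_loop {Δ : CGraph W s}
    (hconn : Δ.Connected) (hadm : Δ.Admissible) (hchi : Δ.chi = 1)
    {n : ℕ} (hn : 0 < n) {A : ℕ → W} {T : ℕ → Fin s × W × W}
    (hAn : A n = A 0)
    (hAinj : ∀ i < n, ∀ j < n, A i = A j → i = j)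
    (hT : ∀ i < n, T i ∈ Eset Δ ∧ connects (T i) (A i) (A (i + 1)))
    (hTinj : ∀ i < n, ∀ j < n, T i = T j → i = j) :
    ∃ P : CGraph W s, P.IsLoopOf Δ ∧ Eset P = T '' ↑(Finset.range n) := by
  set Timg : Set (Fin s × W × W) := T '' ↑(Finset.range n) with hTimg
  have hmemT : ∀ i < n, T i ∈ Timg := by
    intro i hi
    exact ⟨i, Finset.mem_coe.mpr (Finset.mem_range.mpr hi), rfl⟩
  have hmemT' : ∀ p ∈ Timg, ∃ i < n, T i = p := by
    rintro p ⟨i, hi, rfl⟩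
    exact ⟨i, Finset.mem_range.mp hi, rfl⟩
  by_cases hcase : ∃ P : CGraph W s, P.IsLoopOf Δ ∧ Eset P ⊆ Timg
  · -- Case I: that loop's edges are exactly the walk's edges
    obtain ⟨P, hloop, hPsub⟩ := hcase
    refine ⟨P, hloop, Set.Subset.antisymm hPsub ?_⟩
    obtain ⟨r, hcomp, hnt, hcl⟩ := loop_spec hloop
    have hsub : P.Subgraph (Δ.mono r) := hcomp.1
    -- a seed edge
    obtain ⟨j0, hj0, hj0P⟩ : ∃ j0 < n, T j0 ∈ Eset P := by
      rw [CGraph.Trivial] at hnt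
      push_neg at hnt
      obtain ⟨r', a, b, hab⟩ := hnt
      obtain ⟨i, hi, hip⟩ := hmemT' _ (hPsub (show (r', a, b) ∈ Eset P from hab))
      refine ⟨i, hi, ?_⟩
      show T i ∈ Eset P
      rw [hip]
      exact hab
    -- propagation step
    have hstep : ∀ j < n, T j ∈ Eset P → T ((j + 1) % n) ∈ Eset P := by
      intro j hj hTj
      set jn := (j + 1) % n with hjn
      have hjn_lt : jn < n := Nat.mod_lt _ hn
      have hAjn : A jn = A (j + 1) := by
        rcases Nat.lt_or_ge (j + 1) n with h | h
        · rw [hjn, Nat.mod_eq_of_lt h]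
        · have hj1 : j + 1 = n := by omega
          rw [hjn, hj1, Nat.mod_self, ← hAn]
      set B := A (j + 1) with hB
      have hBP : B ∈ P.verts := by
        obtain ⟨hTe, hTc⟩ := hT j hj
        rcases hTc with ⟨h1, h2⟩ | ⟨h1, h2⟩
        · rw [hB, ← h2]; exact P.memR _ _ _ hTj
        · rw [hB, ← h1]; exact P.memL _ _ _ hTj
      -- incidence: any walk edge touching B is step j or step jn
      have hinc : ∀ k, k < n → (A k = B ∨ A (k + 1) = B) → k = jn ∨ k = j := by
        intro k hk hkB
        rcases hkB with hkB | hkB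
        · left
          rcases Nat.lt_or_ge (j + 1) n with h | h
          · have := hAinj k hk (j + 1) h hkB
            rw [this, hjn, Nat.mod_eq_of_lt h]
          · have hj1 : j + 1 = n := by omega
            have hA0 : A k = A 0 := by rw [hkB, hB, hj1, hAn]
            have := hAinj k hk 0 hn hA0
            rw [this, hjn, hj1, Nat.mod_self]
        · right
          rcases Nat.lt_or_ge (k + 1) n with hk1 | hk1
          · rcases Nat.lt_or_ge (j + 1) n with hj1 | hj1
            · have := hAinj (k + 1) hk1 (j + 1) hj1 hkB
              omega
            · have hj1' : j + 1 = n := by omega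
              have : A (k + 1) = A 0 := by rw [hkB, hB, hj1', hAn]
              have := hAinj (k + 1) hk1 0 hn this
              omega
          · have hk1' : k + 1 = n := by omega
            rcases Nat.lt_or_ge (j + 1) n with hj1 | hj1
            · have : A 0 = A (j + 1) := by rw [← hAn, ← hk1', hkB]
              have := hAinj 0 hn (j + 1) hj1 this
              omega
            · omega
      -- out-edge at B
      obtain ⟨r1, b1, hob⟩ := hcl B hBP
      have hoT : ∃ k < n, T k = (r1, B, b1) :=
        hmemT' _ (hPsub (show (r1, B, b1) ∈ Eset P from hob))
      obtain ⟨k, hk, hkT⟩ := hoT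
      have hkinc : k = jn ∨ k = j := by
        apply hinc k hk
        obtain ⟨-, hTc⟩ := hT k hk
        rw [hkT] at hTc
        rcases hTc with ⟨h1, h2⟩ | ⟨h1, h2⟩
        · exact Or.inl h1.symm
        · exact Or.inr h1.symm
      rcases hkinc with hkjn | hkj
      · rw [← hkjn]
        show T k ∈ Eset P
        rw [hkT]
        exact hob
      -- out-edge is step j itself; try the in-edge
      obtain ⟨a1, ha1, hib⟩ := closed_in_edge hadm hsub hcl hBP
      have hiT : ∃ l < n, T l = (r, a1, B) :=
        hmemT' _ (hPsub (show (r, a1, B) ∈ Eset P from hib))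
      obtain ⟨l, hl, hlT⟩ := hiT
      have hlinc : l = jn ∨ l = j := by
        apply hinc l hl
        obtain ⟨-, hTc⟩ := hT l hl
        rw [hlT] at hTc
        rcases hTc with ⟨h1, h2⟩ | ⟨h1, h2⟩
        · exact Or.inr h2.symm
        · exact Or.inl h2.symm
      rcases hlinc with hljn | hlj
      · rw [← hljn]
        show T l ∈ Eset P
        rw [hlT]
        exact hib
      -- both are step j: self-loop, so n = 1
      have hTT : (r1, B, b1) = (r, a1, B) := by rw [← hkT, hkj, ← hlj, hlT]
      have hb1 : b1 = B := by
        have := congrArg (fun p : Fin s × W × W => p.2.2) hTT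
        simpa using this
      -- T j = (r1, B, B) connects A j and A (j+1) = B, so A j = B
      have hTj_eq : T j = (r1, B, b1) := by rw [← hkT, hkj]
      have hAjB : A j = B := by
        obtain ⟨-, hTc⟩ := hT j hj
        rw [hTj_eq, hb1] at hTc
        rcases hTc with ⟨h1, h2⟩ | ⟨h1, h2⟩
        · exact h1.symm
        · exact h2.symm
      -- A j = A (j+1): forces j+1 = n and j = 0
      have hj1n : j + 1 = n := by
        by_contra hne
        have hj1 : j + 1 < n := by omega
        have := hAinj j hj (j + 1) hj1 hAjB
        omega
      have hj0' : j = 0 := by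
        have hA0 : A j = A 0 := by rw [hAjB, hB, hj1n, hAn]
        exact hAinj j hj 0 hn hA0
      have hn1 : n = 1 := by omega
      have hjnj : jn = j := by
        rw [hjn, hj0', hn1]
      rw [hjnj]
      exact hTj
    -- iterate the propagation from the seed
    have hiter : ∀ k : ℕ, T ((j0 + k) % n) ∈ Eset P := by
      intro k
      induction k with
      | zero => simpa [Nat.mod_eq_of_lt hj0] using hj0P
      | succ m ih =>
        have h1 := hstep ((j0 + m) % n) (Nat.mod_lt _ hn) ih
        have h2 : ((j0 + m) % n + 1) % n = (j0 + (m + 1)) % n := by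
          rw [Nat.mod_add_mod, Nat.add_assoc]
        rwa [h2] at h1
    rintro p ⟨i, hi, rfl⟩
    have hi' : i < n := Finset.mem_range.mp hi
    have := hiter (i + n - j0)
    have heq : (j0 + (i + n - j0)) % n = i := by
      have h1 : j0 + (i + n - j0) = i + n := by omega
      rw [h1, Nat.add_mod_right, Nat.mod_eq_of_lt hi']
    rwa [heq] at this
  · -- Case II: contradiction via edge counting
    exfalso
    push_neg at hcase
    haveI := loops_finite Δ
    have hch : ∀ P : {P : CGraph W s // P.IsLoopOf Δ}, ∃ p, p ∈ Eset P.1 ∧ p ∉ Timg := by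
      intro P
      obtain ⟨p, hp1, hp2⟩ := Set.not_subset.mp (hcase P.1 P.2)
      exact ⟨p, hp1, hp2⟩
    choose c hc1 hc2 using hch
    have hcinj : Function.Injective c := by
      intro P Q h
      apply Subtype.ext
      exact loops_edge_disjoint P.2 Q.2 (hc1 P) (h ▸ hc1 Q)
    set S := Set.range c with hS
    have hSfin : S.Finite := Set.finite_range c
    have hT0S : T 0 ∉ S := by
      rintro ⟨P, hP⟩
      have := hmemT 0 hn
      rw [← hP] at this
      exact hc2 P this
    set X := insert (T 0) S with hX
    have hXsub : X ⊆ Eset Δ := by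
      rintro p (rfl | ⟨P, rfl⟩)
      · exact (hT 0 hn).1
      · exact Eset_subset_of_subgraph (loop_subgraph P.2) (hc1 P)
    -- connectivity of Δ minus X
    set R := Relation.ReflTransGen (Δ.del X).Adj with hR
    have hRsymm : ∀ x y, R x y → R y x := fun x y h => rtg_symm (fun _ _ => adj_symm) h
    have hTmid : ∀ i, 0 < i → i < n → (Δ.del X).Adj (A i) (A (i + 1)) := by
      intro i h0 hi
      apply adj_iff.mpr
      refine ⟨T i, ?_, (hT i hi).2⟩
      rw [Eset_del]
      refine ⟨(hT i hi).1, ?_⟩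
      rintro (hT0 | hTS)
      · exact absurd (hTinj i hi 0 hn hT0) (by omega)
      · obtain ⟨P, hP⟩ := hTS
        have := hmemT i hi
        rw [← hP] at this
        exact hc2 P this
    have hT0end : R (A 0) (A 1) := by
      apply hRsymm
      -- walk from A 1 along the remaining steps to A n = A 0
      have : R (A (0 + 1)) (A ((n - 1) + 1)) := by
        have hw : ∀ j < n - 1, (Δ.del X).Adj (A (j + 1)) (A (j + 1 + 1)) := by
          intro j hj
          exact hTmid (j + 1) (by omega) (by omega)
        exact walk_to_rtg (w := fun j => A (j + 1)) (n := n - 1) hw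
      have he : (n - 1) + 1 = n := by omega
      rw [he, hAn] at this
      exact this
    -- endpoints of each removed loop edge are connected in Δ.del X
    have hcarc : ∀ P : {P : CGraph W s // P.IsLoopOf Δ}, R (c P).2.2 (c P).2.1 := by
      intro P
      obtain ⟨r, hcomp, hnt, hcl⟩ := loop_spec P.2
      have hsub : P.1.Subgraph (Δ.mono r) := hcomp.1
      have hcol : (c P).1 = r := (color_of_mono hsub (hc1 P)).1
      have hedge : P.1.E r (c P).2.1 (c P).2.2 := by
        have := hc1 P
        rw [show c P = ((c P).1, (c P).2.1, (c P).2.2) from rfl] at this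
        rw [← hcol]
        exact this
      have harc := closed_arc hadm hsub hcl hedge
      refine rtg_lift_rtg ?_ harc
      intro x y hxy
      obtain ⟨p, hpP, hpne, hpc⟩ := hxy
      have hcp : c P = (r, (c P).2.1, (c P).2.2) := by
        rw [show ((r, (c P).2.1, (c P).2.2) : Fin s × W × W) = ((c P).1, (c P).2.1, (c P).2.2) by rw [hcol]]
      have hpne' : p ≠ c P := by rw [hcp]; exact hpne
      have hpS : p ∉ S := by
        rintro ⟨Q, hQ⟩
        have hq1 : p ∈ Eset Q.1 := by rw [← hQ]; exact hc1 Q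
        have hPQ : P.1 = Q.1 := loops_edge_disjoint P.2 Q.2 hpP hq1
        have : Q = P := (Subtype.ext hPQ).symm
        rw [this] at hQ
        exact hpne' hQ.symm
      by_cases hpT0 : p = T 0
      · -- detour via the rest of the walk
        have hT0c := (hT 0 hn).2
        rw [← hpT0] at hT0c
        rcases hpc with ⟨h1, h2⟩ | ⟨h1, h2⟩ <;> rcases hT0c with ⟨h3, h4⟩ | ⟨h3, h4⟩
        · rw [← h1, ← h2, h3, h4]; exact hT0end
        · rw [← h1, ← h2, h3, h4]; exact hRsymm _ _ hT0end
        · rw [← h1, ← h2, h3, h4]; exact hRsymm _ _ hT0end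
        · rw [← h1, ← h2, h3, h4]; exact hT0end
      · apply Relation.ReflTransGen.single
        apply adj_iff.mpr
        refine ⟨p, ?_, hpc⟩
        rw [Eset_del]
        refine ⟨Eset_subset_of_subgraph (loop_subgraph P.2) hpP, ?_⟩
        rintro (h | h)
        · exact hpT0 h
        · exact hpS h
    -- Δ.del X is connected
    have hconn'' : (Δ.del X).Connected := by
      intro a ha b hb
      refine rtg_lift_rtg ?_ (hconn a ha b hb)
      intro x y hxy
      obtain ⟨p, hpE, hpc⟩ := adj_iff.mp hxy
      by_cases hpT0 : p = T 0
      · have hT0c := (hT 0 hn).2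
        rw [← hpT0] at hT0c
        rcases hpc with ⟨h1, h2⟩ | ⟨h1, h2⟩ <;> rcases hT0c with ⟨h3, h4⟩ | ⟨h3, h4⟩
        · rw [← h1, ← h2, h3, h4]; exact hT0end
        · rw [← h1, ← h2, h3, h4]; exact hRsymm _ _ hT0end
        · rw [← h1, ← h2, h3, h4]; exact hRsymm _ _ hT0end
        · rw [← h1, ← h2, h3, h4]; exact hT0end
      · by_cases hpS : p ∈ S
        · obtain ⟨P, hP⟩ := hpS
          have harc := hcarc P
          rw [hP] at harc
          rcases hpc with ⟨h1, h2⟩ | ⟨h1, h2⟩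
          · rw [← h1, ← h2]; exact hRsymm _ _ harc
          · rw [← h1, ← h2]; exact harc
        · apply Relation.ReflTransGen.single
          apply adj_iff.mpr
          refine ⟨p, ?_, hpc⟩
          rw [Eset_del]
          exact ⟨hpE, fun h => h.elim hpT0 hpS⟩
    -- counting contradiction
    have htree := vertCount_le_edgeCount_add_one (Δ.del X) hconn''
    have hXcard : X.ncard = Δ.loopCount + 1 := by
      rw [hX, Set.ncard_insert_of_notMem hT0S hSfin, hS]
      congr 1
      rw [← Nat.card_coe_set_eq]
      have hcongr : Nat.card ↥(Set.range c) = Nat.card {P : CGraph W s // P.IsLoopOf Δ} :=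
        Nat.card_congr (Equiv.ofInjective c hcinj).symm
      rw [hcongr]
      rfl
    have hXle : X.ncard ≤ (Eset Δ).ncard :=
      Set.ncard_le_ncard hXsub (Eset_finite Δ)
    have hEdel : edgeCount (Δ.del X) = (Eset Δ).ncard - X.ncard := by
      rw [edgeCount_eq_ncard, Eset_del, Set.ncard_diff hXsub (hSfin.insert _)]
    have hVdel : vertCount (Δ.del X) = Δ.vertCount := rfl
    have hchieq : (Δ.vertCount : ℤ) - Δ.edgeCount + Δ.loopCount = 1 := hchi
    rw [edgeCount_eq_ncard] at hchieq
    rw [hVdel, hEdel, hXcard] at htree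
    omega

end CGraph
namespace CGraph

attribute [local instance] Classical.propDecidable

variable {V : Type} {s : ℕ}

lemma rtg_map {α β : Type*} {r : α → α → Prop} {q : β → β → Prop} (f : α → β)
    (h : ∀ x y, r x y → q (f x) (f y)) {a b : α} (hab : Relation.ReflTransGen r a b) :
    Relation.ReflTransGen q (f a) (f b) := by
  induction hab with
  | refl => exact .refl
  | tail _ hstep ih => exact ih.tail (h _ _ hstep)

lemma quot_mk_eq_iff (π : Setoid V) (x y : V) :
    Quotient.mk π x = Quotient.mk π y ↔ π.r x y :=
  ⟨fun h => Quotient.exact h, fun h => Quotient.sound h⟩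

lemma quot_edge (π : Setoid V) {Γ : CGraph V s} {r : Fin s} {u v : V} (h : Γ.E r u v) :
    (Γ.quot π).E r (Quotient.mk π u) (Quotient.mk π v) :=
  ⟨u, v, h, rfl, rfl⟩

lemma quot_connected (π : Setoid V) {Γ : CGraph V s} (hconn : Γ.Connected) :
    (Γ.quot π).Connected := by
  rintro A ⟨a, ha, rfl⟩ B ⟨b, hb, rfl⟩
  refine rtg_map (Quotient.mk π) ?_ (hconn a ha b hb)
  intro x y hxy
  rcases hxy with ⟨r, h | h⟩
  · exact ⟨r, Or.inl (quot_edge π h)⟩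
  · exact ⟨r, Or.inr (quot_edge π h)⟩

end CGraph
/-- If `Γ` is a connected strongly admissible graph and `π` is a strong congruence
of `Γ` with `χ(Γ/π) = 1`, then all blocks of `π` (as a partition of the vertex set
of `Γ`) are singletons. -/
theorem blocks_singletons_of_strong_congruence_chi_one {V : Type} {s : ℕ}
    (hs : 0 < s) (d : Fin s → ℕ∞) (hd : ∀ r, 1 ≤ d r)
    (Γ : CGraph V s) (hconn : Γ.Connected) (hsa : Γ.StronglyAdmissible d)
    (π : Setoid V) (hπ : Γ.IsStrongCongruence d π)
    (hchi : (Γ.quot π).chi = 1) :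
    ∀ a ∈ Γ.verts, ∀ b ∈ Γ.verts, π.r a b → a = b := by
  classical
  intro a ha b hb hab
  by_contra hne
  have hadm : Γ.Admissible := hsa.1
  have hadmΔ : (Γ.quot π).Admissible := hπ.2.1
  have hconnΔ : (Γ.quot π).Connected := CGraph.quot_connected π hconn
  -- the minimal bad walk
  set Q : ℕ → Prop := fun m => ∃ x y : V,
      (x ∈ Γ.verts ∧ y ∈ Γ.verts ∧ π.r x y ∧ x ≠ y) ∧
      ∃ w : ℕ → V, w 0 = x ∧ w m = y ∧ ∀ i < m, Γ.Adj (w i) (w (i + 1)) with hQdef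
  have hQex : ∃ m, Q m := by
    obtain ⟨m, w, h0, hm, hw⟩ := CGraph.rtg_to_walk (hconn a ha b hb)
    exact ⟨m, a, b, ⟨ha, hb, hab, hne⟩, w, h0, hm, hw⟩
  set n := Nat.find hQex with hndef
  obtain ⟨x, y, hbad, w, hw0, hwn, hw⟩ : Q n := Nat.find_spec hQex
  have hn : 0 < n := by
    rcases Nat.eq_zero_or_pos n with h0 | h
    · exfalso
      apply hbad.2.2.2
      rw [← hw0, ← hwn, h0]
    · exact h
  have hne0 : w 0 ≠ w n := by rw [hw0, hwn]; exact hbad.2.2.2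
  have hπ0n : π.r (w 0) (w n) := by rw [hw0, hwn]; exact hbad.2.2.1
  have hwv : ∀ k ≤ n, w k ∈ Γ.verts := by
    intro k hk
    rcases Nat.lt_or_ge k n with h | h
    · exact CGraph.adj_mem_left (hw k h)
    · have hkn : k = n := by omega
      have := CGraph.adj_mem_right (hw (n - 1) (by omega))
      rw [show n - 1 + 1 = n by omega] at this
      rw [hkn]
      exact this
  -- minimality: no interior π-relations
  have hmin : ∀ i j, i < j → j ≤ n → ¬(i = 0 ∧ j = n) → ¬ π.r (w i) (w j) := by
    intro i j hij hjn hnotp hπij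
    by_cases heq : w i = w j
    · -- splice out the repeated part: shorter walk from x to y
      have hQ' : Q (n - (j - i)) := by
        refine ⟨x, y, hbad, fun k => if k < i then w k else w (k + (j - i)), ?_, ?_, ?_⟩
        · by_cases h0i : 0 < i
          · simp only [if_pos h0i]
            exact hw0
          · have hi0 : i = 0 := by omega
            simp only [Nat.lt_irrefl, if_neg (by omega : ¬ (0 < i))]
            rw [Nat.zero_add, show j - i = j by omega, ← heq, hi0]
            exact hw0
        · have hge : ¬ (n - (j - i) < i) := by omega
          simp only [if_neg hge]
          rw [show n - (j - i) + (j - i) = n by omega]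
          exact hwn
        · intro k hk
          have hv : ∀ m, (fun k => if k < i then w k else w (k + (j - i))) m
              = if m < i then w m else w (m + (j - i)) := fun m => rfl
          rw [hv k, hv (k + 1)]
          by_cases hk1 : k + 1 < i
          · rw [if_pos (by omega : k < i), if_pos hk1]
            exact hw k (by omega)
          · by_cases hk2 : k < i
            · rw [if_pos hk2, if_neg hk1]
              rw [show k + 1 + (j - i) = j by omega, ← heq, show i = k + 1 by omega]
              exact hw k (by omega)
            · rw [if_neg hk2, if_neg hk1]
              rw [show k + 1 + (j - i) = (k + (j - i)) + 1 by omega]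
              exact hw (k + (j - i)) (by omega)
      have hfm := Nat.find_min hQex (m := n - (j - i)) (by omega)
      exact hfm hQ'
    · -- shorter bad pair
      have hQ' : Q (j - i) := by
        refine ⟨w i, w j, ⟨hwv i (by omega), hwv j hjn, hπij, heq⟩,
          fun k => w (k + i), by show w (0 + i) = w i; rw [Nat.zero_add], ?_, ?_⟩
        · show w (j - i + i) = w j
          rw [show j - i + i = j by omega]
        · intro k hk
          show Γ.Adj (w (k + i)) (w (k + 1 + i))
          rw [show k + 1 + i = (k + i) + 1 by omega]
          exact hw (k + i) (by omega)
      have hfm := Nat.find_min hQex (m := j - i) (by omega)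
      exact hfm hQ'
  have hinjw : ∀ i ≤ n, ∀ j ≤ n, ¬(i = 0 ∧ j = n) → ¬(j = 0 ∧ i = n) → w i = w j → i = j := by
    intro i hi j hj h1 h2 heq
    by_contra hne'
    rcases Nat.lt_or_ge i j with h | h
    · exact hmin i j h hj h1 (by rw [heq])
    · have hlt : j < i := by omega
      exact hmin j i hlt hi h2 (by rw [heq])
  -- the projected closed simple walk
  set A : ℕ → Quotient π := fun i => Quotient.mk π (w i) with hAdef
  have hAn : A n = A 0 := Quotient.sound (Setoid.symm hπ0n)
  have hAinj : ∀ i < n, ∀ j < n, A i = A j → i = j := by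
    intro i hi j hj hAij
    by_contra hne'
    have hπij := (CGraph.quot_mk_eq_iff π _ _).mp hAij
    rcases Nat.lt_or_ge i j with h | h
    · exact hmin i j h (by omega) (by omega) hπij
    · exact hmin j i (by omega) (by omega) (by omega) (Setoid.symm hπij)
  -- the chosen step edges
  haveI : Nonempty (Fin s × V × V) := ⟨(⟨0, hs⟩, a, a)⟩
  have hsel : ∀ i < n, ∃ tt : Fin s × V × V,
      tt ∈ CGraph.Eset Γ ∧ CGraph.connects tt (w i) (w (i + 1)) :=
    fun i hi => CGraph.adj_iff.mp (hw i hi)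
  choose! t ht1 ht2 using hsel
  set T : ℕ → Fin s × Quotient π × Quotient π :=
    fun i => ((t i).1, Quotient.mk π (t i).2.1, Quotient.mk π (t i).2.2) with hTdef
  have hT : ∀ i < n, T i ∈ CGraph.Eset (Γ.quot π) ∧
      CGraph.connects (T i) (A i) (A (i + 1))  := by
    intro i hi
    constructor
    · exact CGraph.quot_edge π (ht1 i hi)
    · rcases ht2 i hi with ⟨h1, h2⟩ | ⟨h1, h2⟩
      · exact Or.inl ⟨congrArg (Quotient.mk π) h1, congrArg (Quotient.mk π) h2⟩
      · exact Or.inr ⟨congrArg (Quotient.mk π) h1, congrArg (Quotient.mk π) h2⟩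
  have hTinj : ∀ i < n, ∀ j < n, T i = T j → i = j := by
    intro i hi j hj hTT
    by_contra hne'
    have hc : (t i).1 = (t j).1 := congrArg (fun p => p.1) hTT
    have e21 : Quotient.mk π (t i).2.1 = Quotient.mk π (t j).2.1 :=
      congrArg (fun p : Fin s × Quotient π × Quotient π => p.2.1) hTT
    have e22 : Quotient.mk π (t i).2.2 = Quotient.mk π (t j).2.2 :=
      congrArg (fun p : Fin s × Quotient π × Quotient π => p.2.2) hTT
    have hti : Γ.E (t i).1 (t i).2.1 (t i).2.2 := ht1 i hi
    have htj : Γ.E (t j).1 (t j).2.1 (t j).2.2 := ht1 j hj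
    rcases ht2 i hi with ⟨hi1, hi2⟩ | ⟨hi1, hi2⟩ <;>
      rcases ht2 j hj with ⟨hj1, hj2⟩ | ⟨hj1, hj2⟩
    · -- both forward
      have eA : A i = A j := by
        show Quotient.mk π (w i) = Quotient.mk π (w j)
        rw [← hi1, ← hj1]; exact e21
      exact hne' (hAinj i hi j hj eA)
    · -- i forward, j backward
      have eA1 : A i = A (j + 1) := by
        show Quotient.mk π (w i) = Quotient.mk π (w (j + 1))
        rw [← hi1, ← hj1]; exact e21
      have eA2 : A (i + 1) = A j := by
        show Quotient.mk π (w (i + 1)) = Quotient.mk π (w j)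
        rw [← hi2, ← hj2]; exact e22
      rw [hi1, hi2] at hti
      rw [hj1, hj2] at htj
      rw [hc] at hti
      rcases Nat.lt_or_ge (j + 1) n with hj1n | hj1n
      · have hij1 : i = j + 1 := hAinj i hi (j + 1) hj1n eA1
        rcases Nat.lt_or_ge (i + 1) n with hi1n | hi1n
        · have := hAinj (i + 1) hi1n j hj eA2
          omega
        · have hi1n' : i + 1 = n := by omega
          have e2' : A 0 = A j := by rw [← hAn, ← hi1n']; exact eA2
          have hj0 : j = 0 := (hAinj 0 hn j hj e2').symm
          rw [hij1] at hti
          have hclash := hadm.1 _ _ _ _ hti htj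
          have hidx : j + 1 + 1 = n := by omega
          rw [hidx, hj0] at hclash
          exact hne0 hclash.symm
      · have hj1n' : j + 1 = n := by omega
        have e1' : A i = A 0 := by rw [eA1, hj1n', hAn]
        have hi0 : i = 0 := hAinj i hi 0 hn e1'
        rcases Nat.lt_or_ge (i + 1) n with hi1n | hi1n
        · have hji : i + 1 = j := hAinj (i + 1) hi1n j hj eA2
          rw [show w j = w (i + 1) from by rw [← hji],
            show w (j + 1) = w (i + 1 + 1) from by rw [← hji]] at htj
          have hclash := hadm.2 _ _ _ _ hti htj
          have hidx : i + 1 + 1 = n := by omega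
          rw [hidx, hi0] at hclash
          exact hne0 hclash
        · omega
    · -- i backward, j forward
      have eA1 : A (i + 1) = A j := by
        show Quotient.mk π (w (i + 1)) = Quotient.mk π (w j)
        rw [← hi1, ← hj1]; exact e21
      have eA2 : A i = A (j + 1) := by
        show Quotient.mk π (w i) = Quotient.mk π (w (j + 1))
        rw [← hi2, ← hj2]; exact e22
      rw [hi1, hi2] at hti
      rw [hj1, hj2] at htj
      rw [hc] at hti
      rcases Nat.lt_or_ge (j + 1) n with hj1n | hj1n
      · have hij1 : i = j + 1 := hAinj i hi (j + 1) hj1n eA2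
        rcases Nat.lt_or_ge (i + 1) n with hi1n | hi1n
        · have := hAinj (i + 1) hi1n j hj eA1
          omega
        · have hi1n' : i + 1 = n := by omega
          have e2' : A 0 = A j := by rw [← hAn, ← hi1n']; exact eA1
          have hj0 : j = 0 := (hAinj 0 hn j hj e2').symm
          rw [← hij1] at htj
          have hclash := hadm.2 _ _ _ _ htj hti
          have hidx : i + 1 = n := by omega
          rw [hidx, hj0] at hclash
          exact hne0 hclash
      · have hj1n' : j + 1 = n := by omega
        have e1' : A i = A 0 := by rw [eA2, hj1n', hAn]
        have hi0 : i = 0 := hAinj i hi 0 hn e1'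
        rcases Nat.lt_or_ge (i + 1) n with hi1n | hi1n
        · have hji : i + 1 = j := hAinj (i + 1) hi1n j hj eA1
          rw [show w j = w (i + 1) from by rw [← hji],
            show w (j + 1) = w (i + 1 + 1) from by rw [← hji]] at htj
          have hclash := hadm.1 _ _ _ _ htj hti
          have hidx : i + 1 + 1 = n := by omega
          rw [hidx, hi0] at hclash
          exact hne0 hclash.symm
        · omega
    · -- both backward
      have eA : A i = A j := by
        show Quotient.mk π (w i) = Quotient.mk π (w j)
        rw [← hi2, ← hj2]; exact e22
      exact hne' (hAinj i hi j hj eA)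
  obtain ⟨P, hloopP, hEeq⟩ :=
    CGraph.closed_walk_is_loop hconnΔ hadmΔ hchi hn hAn hAinj hT hTinj
  obtain ⟨r, hcompP, hntP, hclP⟩ := CGraph.loop_spec hloopP
  have hTP : ∀ i < n, T i ∈ CGraph.Eset P := by
    intro i hi
    rw [hEeq]
    exact ⟨i, Finset.mem_coe.mpr (Finset.mem_range.mpr hi), rfl⟩
  have hcolor : ∀ i < n, (t i).1 = r := by
    intro i hi
    exact (CGraph.color_of_mono hcompP.1 (hTP i hi)).1
  have hcnt : P.edgeCount = n := by
    rw [CGraph.edgeCount_eq_ncard, hEeq, Set.ncard_image_of_injOn, Set.ncard_coe_finset,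
      Finset.card_range]
    intro i hi j hj hij
    exact hTinj i (Finset.mem_range.mp hi) j (Finset.mem_range.mp hj) hij
  have hpathP : P.IsRPath (Γ.quot π) r := ⟨hcompP, hntP⟩
  have hdreq : (n : ℕ∞) = d r := by
    have := (hπ.2.2 r P hpathP).1 hclP
    rw [hcnt] at this
    exact this
  have hdir : ∀ i < n, Γ.E r (w i) (w (i + 1)) ∨ Γ.E r (w (i + 1)) (w i) := by
    intro i hi
    have hti : Γ.E (t i).1 (t i).2.1 (t i).2.2 := ht1 i hi
    rw [hcolor i hi] at hti
    rcases ht2 i hi with ⟨h1, h2⟩ | ⟨h1, h2⟩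
    · rw [h1, h2] at hti; exact Or.inl hti
    · rw [h1, h2] at hti; exact Or.inr hti
  have hstep2 : ∀ i, i + 1 < n → w (i + 1 + 1) = w i → False := by
    intro i hilt heq
    by_cases hpair : i = 0 ∧ i + 1 + 1 = n
    · obtain ⟨h0, h2n⟩ := hpair
      apply hne0
      rw [← h0, ← h2n]
      exact heq.symm
    · exact hmin i (i + 1 + 1) (by omega) (by omega) hpair (by rw [heq])
  have hinjchain : ∀ i < n, ∀ j < n, w i = w j → i = j := by
    intro i hi j hj heq
    exact hinjw i (by omega) j (by omega) (by omega) (by omega) heq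
  rcases hdir 0 hn with h0 | h0
  · -- all steps forward
    have hall : ∀ i < n, Γ.E r (w i) (w (i + 1)) := by
      intro i
      induction i with
      | zero => intro _; exact h0
      | succ k ih =>
        intro hk
        have hfk : Γ.E r (w k) (w (k + 1)) := ih (by omega)
        rcases hdir (k + 1) hk with h | h
        · exact h
        · exfalso
          exact hstep2 k hk (hadm.2 _ _ _ _ h hfk)
    have := CGraph.chain_closes hsa hn hdreq hall hinjchain
    exact hne0 this.symm
  · -- all steps backward
    have hall : ∀ i < n, Γ.E r (w (i + 1)) (w i) := by
      intro i
      induction i with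
      | zero => intro _; exact h0
      | succ k ih =>
        intro hk
        have hbk : Γ.E r (w (k + 1)) (w k) := ih (by omega)
        rcases hdir (k + 1) hk with h | h
        · exfalso
          exact hstep2 k hk (hadm.1 _ _ _ _ h hbk)
        · exact h
    have hy : ∀ i < n, Γ.E r ((fun k => w (n - k)) i) ((fun k => w (n - k)) (i + 1)) := by
      intro i hi
      show Γ.E r (w (n - i)) (w (n - (i + 1)))
      have := hall (n - (i + 1)) (by omega)
      rw [show n - (i + 1) + 1 = n - i by omega] at this
      exact this
    have hyinj : ∀ i < n, ∀ j < n,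
        (fun k => w (n - k)) i = (fun k => w (n - k)) j → i = j := by
      intro i hi j hj heq
      have heq' : w (n - i) = w (n - j) := heq
      have := hinjw (n - i) (by omega) (n - j) (by omega) (by omega) (by omega) heq'
      omega
    have hcl := CGraph.chain_closes hsa hn hdreq hy hyinj
    have hcl' : w (n - n) = w (n - 0) := hcl
    rw [show n - n = 0 by omega, show n - 0 = n by omega] at hcl'
    exact hne0 hcl'
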